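/- (Orthogonal Procrustes solution for the V-subproblem) Let M be a real B×R matrix admitting a factorization M = P D Qᵀ, where P ∈ ℝ^{B×R} has orthonormal columns (PᵀP = I_R), Q ∈ ℝ^{R×R} is orthogonal (QᵀQ = I_R), and D ∈ ℝ^{R×R} is a diagonal matrix with nonnegative diagonal entries. Then for every real B×R matrix V with orthonormal columns (VᵀV = I_R), one has ⟨M, V⟩ ≤ ⟨M, P Qᵀ⟩; moreover ⟨M, P Qᵀ⟩ = trace(D). In other words, V* = P Qᵀ maximizes ⟨M, V⟩ over all V with VᵀV = I_R. -/
import Mathlib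


open Matrix

/-- Orthogonal Procrustes: if `M = P * D * Qᵀ` with `P` having orthonormal columns,
`Q` orthogonal, and `D = diagonal d` with `d ≥ 0`, then `V* = P * Qᵀ` maximizes
the Frobenius inner product `⟨M, V⟩` over all `V` with orthonormal columns, and
the maximal value is `trace D`. -/
theorem orthogonal_procrustes
    (B R : ℕ)
    (M P : Matrix (Fin B) (Fin R) ℝ)
    (Q : Matrix (Fin R) (Fin R) ℝ)
    (d : Fin R → ℝ)
    (hP : Pᵀ * P = 1)
    (hQ : Qᵀ * Q = 1)
    (hd : ∀ i, 0 ≤ d i)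
    (hM : M = P * Matrix.diagonal d * Qᵀ) :
    (∀ V : Matrix (Fin B) (Fin R) ℝ, Vᵀ * V = 1 →
        (∑ i, ∑ j, M i j * V i j) ≤ ∑ i, ∑ j, M i j * (P * Qᵀ) i j) ∧
      (∑ i, ∑ j, M i j * (P * Qᵀ) i j) = Matrix.trace (Matrix.diagonal d) := by
  have key : ∀ V : Matrix (Fin B) (Fin R) ℝ,
      (∑ i, ∑ j, M i j * V i j) = ∑ k, d k * (Pᵀ * V * Q) k k := by
    intro V
    have h1 : (∑ i, ∑ j, M i j * V i j) = Matrix.trace (Mᵀ * V) := by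
      rw [Matrix.trace]
      simp only [Matrix.diag, Matrix.mul_apply, Matrix.transpose_apply]
      rw [Finset.sum_comm]
    have h2 : Mᵀ * V = Q * (Matrix.diagonal d * (Pᵀ * V)) := by
      rw [hM]
      simp [Matrix.transpose_mul, Matrix.diagonal_transpose, Matrix.mul_assoc]
    rw [h1, h2, Matrix.trace_mul_comm, Matrix.trace]
    simp [Matrix.diag, Matrix.diagonal_mul, Matrix.mul_assoc]
  have hstar : Pᵀ * (P * Qᵀ) * Q = 1 := by
    calc Pᵀ * (P * Qᵀ) * Q = (Pᵀ * P) * (Qᵀ * Q) := by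
          simp [Matrix.mul_assoc]
      _ = 1 := by rw [hP, hQ, one_mul]
  have hval : (∑ i, ∑ j, M i j * (P * Qᵀ) i j) = ∑ k, d k := by
    rw [key, hstar]
    simp [Matrix.one_apply_eq]
  constructor
  · intro V hV
    rw [key V, hval]
    apply Finset.sum_le_sum
    intro k _
    have hdiag : (Pᵀ * V * Q) k k = ∑ i, P i k * (V * Q) i k := by
      simp [Matrix.mul_apply, Matrix.transpose_apply, Finset.sum_mul]
      rw [Finset.sum_comm]
      congr 1; ext i
      simp [Finset.mul_sum, Matrix.mul_apply, mul_comm, mul_left_comm]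
    have hPk : (∑ i, P i k ^ 2) = 1 := by
      have := congrArg (fun A => A k k) hP
      simpa [Matrix.mul_apply, Matrix.transpose_apply, sq] using this
    have hWk : (∑ i, (V * Q) i k ^ 2) = 1 := by
      have hW : (V * Q)ᵀ * (V * Q) = 1 := by
        calc (V * Q)ᵀ * (V * Q) = Qᵀ * (Vᵀ * V) * Q := by
              simp [Matrix.transpose_mul, Matrix.mul_assoc]
          _ = 1 := by rw [hV, mul_one, hQ]
      have := congrArg (fun A => A k k) hW
      simpa [Matrix.mul_apply, Matrix.transpose_apply, sq, mul_comm] using this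
    have hcs : (∑ i, P i k * (V * Q) i k) ^ 2 ≤ 1 := by
      have := Finset.sum_mul_sq_le_sq_mul_sq Finset.univ
        (fun i => P i k) (fun i => (V * Q) i k)
      simpa [hPk, hWk] using this
    have hle : (Pᵀ * V * Q) k k ≤ 1 := by
      rw [hdiag]
      exact le_trans (le_abs_self _) ((sq_le_one_iff_abs_le_one _).mp hcs)
    calc d k * (Pᵀ * V * Q) k k ≤ d k * 1 :=
          mul_le_mul_of_nonneg_left hle (hd k)
      _ = d k := mul_one _
  · rw [hval, Matrix.trace_diagonal]
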